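/- Forward direction of Theorem 2.1 in the rational case: let z, k ∈ ℂ with z ≠ 0; let x_i : ℝ → ℂ be differentiable with x_i(t) ≠ x_j(t) for i ≠ j; let a_i, b_i : ℝ → ℂˡ and c_i : ℝ → ℂ be differentiable; let λ_i : ℝ → ℂ; set f_{ij} = b_i·a_j. Assume for all t: (i) b_i·a_i = 2; (ii) (ẋ_i − 2/z + 2k)c_i + Σ_{j≠i} f_{ij}(1/(x_i−x_j) − 1/z)c_j = 0; (iii) ċ_i = λ_i c_i + Σ_{j≠i} f_{ij} c_j/(x_i−x_j)²; (iv) ȧ_i = −λ_i a_i − Σ_{j≠i} a_j f_{ji}/(x_i−x_j)²; (v) ḃ_i = λ_i b_i + Σ_{j≠i} b_j f_{ij}/(x_i−x_j)². Then the ℂˡ-valued function Ψ(x,t) = Σ_{i=1}^N c_i(t)·a_i(t)·(1/(x−x_i(t)) − 1/z)·e^{kx+k²t} satisfies the matrix Schrödinger equation ∂_t Ψ(x,t) − ∂²_x Ψ(x,t) + Σ_{i=1}^N a_i(t)·(b_i(t)·Ψ(x,t))/(x−x_i(t))² = 0 at every (x,t) with x ≠ x_i(t) for all i. -/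

import Mathlib

open Finset

private lemma hasDerivAt_congr_value {𝕜 : Type*} [NontriviallyNormedField 𝕜] {F : Type*}
    [NormedAddCommGroup F] [NormedSpace 𝕜 F] {f : 𝕜 → F} {v w : F} {x : 𝕜}
    (h : HasDerivAt f v x) (hvw : v = w) : HasDerivAt f w x := hvw ▸ h

private lemma sum_erase_swap {M : Type*} [AddCommMonoid M] {n : ℕ} (F : Fin n → Fin n → M) :
    ∑ i : Fin n, ∑ j ∈ Finset.univ.erase i, F i j
      = ∑ j : Fin n, ∑ i ∈ Finset.univ.erase j, F i j :=
  Finset.sum_comm' (by intro i j; simp [Finset.mem_erase, ne_comm])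

private lemma diag_identity (d z k L C XP E : ℂ) :
    L * C * (1 / d - 1 / z) * E + C * (XP / d ^ 2) * E + C * (1 / d - 1 / z) * (E * k ^ 2)
      + C * (1 / d - 1 / z) * E * -L
      - C * (2 / d ^ 3 - 2 * k / d ^ 2 + k ^ 2 * (1 / d - 1 / z)) * E
      + C * (1 / d - 1 / z) * E * 2 / d ^ 2
      = E / d ^ 2 * ((XP - 2 / z + 2 * k) * C) := by
  ring

private lemma key_identity (x Xi Xj z : ℂ) (h4 : x - Xi ≠ 0) (h3 : x - Xj ≠ 0)
    (h1 : Xi - Xj ≠ 0) (hz : z ≠ 0) :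
    (1 / (x - Xi) - 1 / z) / (Xi - Xj) ^ 2 - (1 / (x - Xj) - 1 / z) / (Xi - Xj) ^ 2
      + (1 / (x - Xj) - 1 / z) / (x - Xi) ^ 2
      = (1 / (Xi - Xj) - 1 / z) / (x - Xi) ^ 2 := by
  have n1 : (x - Xi) * z * (Xi - Xj) ^ 2 ≠ 0 :=
    mul_ne_zero (mul_ne_zero h4 hz) (pow_ne_zero 2 h1)
  have n2 : (x - Xj) * z * (Xi - Xj) ^ 2 ≠ 0 :=
    mul_ne_zero (mul_ne_zero h3 hz) (pow_ne_zero 2 h1)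
  have n3 : (x - Xj) * z * (x - Xi) ^ 2 ≠ 0 :=
    mul_ne_zero (mul_ne_zero h3 hz) (pow_ne_zero 2 h4)
  have n4 : (Xi - Xj) * z * (x - Xi) ^ 2 ≠ 0 :=
    mul_ne_zero (mul_ne_zero h1 hz) (pow_ne_zero 2 h4)
  rw [div_sub_div _ _ h4 hz, div_sub_div _ _ h3 hz, div_sub_div _ _ h1 hz]
  simp only [div_div]
  rw [div_sub_div _ _ n1 n2, div_add_div _ _ (mul_ne_zero n1 n2) n3,
    div_eq_div_iff (mul_ne_zero (mul_ne_zero n1 n2) n3) n4]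
  ring

set_option maxHeartbeats 2000000 in
/-- Forward direction of Theorem 2.1 in the rational case: the ansatz
`Ψ = Σᵢ cᵢ(t)·aᵢ(t)·Φ(x−xᵢ(t),z)·e^{kx+k²t}` built from a solution of the
Lax equations solves the matrix Schrödinger equation
`∂_tΨ − ∂²_xΨ + Σᵢ aᵢ(bᵢ·Ψ)V(x−xᵢ) = 0` with `V(x) = 1/x²`,
`Φ(x,z) = 1/x − 1/z`. -/
theorem rational_schroedinger_solution (N l : ℕ) (z k : ℂ) (hz : z ≠ 0)
    (X x' : Fin N → ℝ → ℂ) (a b : Fin N → ℝ → Fin l → ℂ)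
    (c : Fin N → ℝ → ℂ) (lam : Fin N → ℝ → ℂ)
    (hXne : ∀ (t : ℝ) (i j : Fin N), i ≠ j → X i t ≠ X j t)
    (hX : ∀ (i : Fin N) (t : ℝ), HasDerivAt (X i) (x' i t) t)
    (hba : ∀ (i : Fin N) (t : ℝ), (∑ α : Fin l, b i t α * a i t α) = 2)
    (heig : ∀ (i : Fin N) (t : ℝ),
      (x' i t - 2 / z + 2 * k) * c i t
        + ∑ j ∈ Finset.univ.erase i,
            (∑ α : Fin l, b i t α * a j t α)
              * (1 / (X i t - X j t) - 1 / z) * c j t = 0)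
    (hc : ∀ (i : Fin N) (t : ℝ), HasDerivAt (c i)
      (lam i t * c i t + ∑ j ∈ Finset.univ.erase i,
        (∑ α : Fin l, b i t α * a j t α) * c j t / (X i t - X j t) ^ 2) t)
    (ha : ∀ (i : Fin N) (t : ℝ), HasDerivAt (a i)
      (-(lam i t) • a i t - ∑ j ∈ Finset.univ.erase i,
        ((∑ α : Fin l, b j t α * a i t α) / (X i t - X j t) ^ 2) • a j t) t)
    (hb : ∀ (i : Fin N) (t : ℝ), HasDerivAt (b i)
      (lam i t • b i t + ∑ j ∈ Finset.univ.erase i,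
        ((∑ α : Fin l, b i t α * a j t α) / (X i t - X j t) ^ 2) • b j t) t) :
    let Ψ : ℂ → ℝ → Fin l → ℂ := fun x t =>
      ∑ i : Fin N,
        (c i t * (1 / (x - X i t) - 1 / z) * Complex.exp (k * x + k ^ 2 * t)) • a i t
    ∀ (x : ℂ) (t : ℝ), (∀ i : Fin N, x ≠ X i t) →
      deriv (fun s : ℝ => Ψ x s) t
        - deriv (fun y : ℂ => deriv (fun y' : ℂ => Ψ y' t) y) x
        + ∑ i : Fin N,
            ((∑ α : Fin l, b i t α * Ψ x t α) / (x - X i t) ^ 2) • a i t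
      = 0 := by
  intro Ψ x t hx
  have hd : ∀ i : Fin N, x - X i t ≠ 0 := fun i => sub_ne_zero.mpr (hx i)
  have hg : ∀ i j : Fin N, i ≠ j → X i t - X j t ≠ 0 :=
    fun i j hij => sub_ne_zero.mpr (hXne t i j hij)
  simp only [Ψ]
  -- time derivative
  have hT : HasDerivAt
      (fun s : ℝ => ∑ i : Fin N,
        (c i s * (1 / (x - X i s) - 1 / z) * Complex.exp (k * x + k ^ 2 * (s : ℂ))) • a i s)
      (∑ i : Fin N,
        ((c i t * (1 / (x - X i t) - 1 / z) * Complex.exp (k * x + k ^ 2 * (t : ℂ))) •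
            (-(lam i t) • a i t - ∑ j ∈ Finset.univ.erase i,
              ((∑ α : Fin l, b j t α * a i t α) / (X i t - X j t) ^ 2) • a j t)
          + (((lam i t * c i t + ∑ j ∈ Finset.univ.erase i,
                (∑ α : Fin l, b i t α * a j t α) * c j t / (X i t - X j t) ^ 2)
                * (1 / (x - X i t) - 1 / z)
              + c i t * (x' i t / (x - X i t) ^ 2)) * Complex.exp (k * x + k ^ 2 * (t : ℂ))
            + c i t * (1 / (x - X i t) - 1 / z)
                * (Complex.exp (k * x + k ^ 2 * (t : ℂ)) * k ^ 2)) • a i t)) t := by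
    apply HasDerivAt.fun_sum
    intro i _
    have hφ : HasDerivAt (fun s : ℝ => 1 / (x - X i s) - 1 / z)
        (x' i t / (x - X i t) ^ 2) t :=
      hasDerivAt_congr_value
        (((hasDerivAt_const t (1 : ℂ)).div ((hX i t).const_sub x) (hd i)).sub_const (1 / z))
        (by ring)
    have hre : HasDerivAt (fun s : ℝ => (s : ℂ)) 1 t :=
      hasDerivAt_congr_value (HasDerivAt.ofReal_comp (hasDerivAt_id' t)) Complex.ofReal_one
    have hexp : HasDerivAt (fun s : ℝ => Complex.exp (k * x + k ^ 2 * (s : ℂ)))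
        (Complex.exp (k * x + k ^ 2 * (t : ℂ)) * k ^ 2) t :=
      hasDerivAt_congr_value (((hre.const_mul (k ^ 2)).const_add (k * x)).cexp) (by ring)
    exact (((hc i t).mul hφ).mul hexp).smul (ha i t)
  rw [hT.deriv]
  -- first space derivative, on a neighborhood
  have hF : ∀ y : ℂ, (∀ i : Fin N, y ≠ X i t) →
      HasDerivAt
        (fun y' : ℂ => ∑ i : Fin N,
          (c i t * (1 / (y' - X i t) - 1 / z) * Complex.exp (k * y' + k ^ 2 * (t : ℂ))) • a i t)
        (∑ i : Fin N,
          (c i t * (-1 / (y - X i t) ^ 2) * Complex.exp (k * y + k ^ 2 * (t : ℂ))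
            + c i t * (1 / (y - X i t) - 1 / z)
                * (Complex.exp (k * y + k ^ 2 * (t : ℂ)) * k)) • a i t) y := by
    intro y hy
    apply HasDerivAt.fun_sum
    intro i _
    have hyd : y - X i t ≠ 0 := sub_ne_zero.mpr (hy i)
    have hφ : HasDerivAt (fun y' : ℂ => 1 / (y' - X i t) - 1 / z) (-1 / (y - X i t) ^ 2) y :=
      hasDerivAt_congr_value
        (((hasDerivAt_const y (1 : ℂ)).div ((hasDerivAt_id' y).sub_const (X i t)) hyd).sub_const
          (1 / z)) (by ring)
    have hexp : HasDerivAt (fun y' : ℂ => Complex.exp (k * y' + k ^ 2 * (t : ℂ)))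
        (Complex.exp (k * y + k ^ 2 * (t : ℂ)) * k) y :=
      hasDerivAt_congr_value ((((hasDerivAt_id' y).const_mul k).add_const (k ^ 2 * (t : ℂ))).cexp)
        (by ring)
    exact ((hφ.const_mul (c i t)).mul hexp).smul_const (a i t)
  -- second space derivative
  have hexpx : HasDerivAt (fun y : ℂ => Complex.exp (k * y + k ^ 2 * (t : ℂ)))
      (Complex.exp (k * x + k ^ 2 * (t : ℂ)) * k) x :=
    hasDerivAt_congr_value ((((hasDerivAt_id' x).const_mul k).add_const (k ^ 2 * (t : ℂ))).cexp)
      (by ring)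
  have hS : HasDerivAt
      (fun y : ℂ => ∑ i : Fin N,
        (c i t * (-1 / (y - X i t) ^ 2) * Complex.exp (k * y + k ^ 2 * (t : ℂ))
          + c i t * (1 / (y - X i t) - 1 / z)
              * (Complex.exp (k * y + k ^ 2 * (t : ℂ)) * k)) • a i t)
      (∑ i : Fin N,
        (c i t * (2 / (x - X i t) ^ 3 - 2 * k / (x - X i t) ^ 2
            + k ^ 2 * (1 / (x - X i t) - 1 / z)) * Complex.exp (k * x + k ^ 2 * (t : ℂ))) • a i t)
      x := by
    apply HasDerivAt.fun_sum
    intro i _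
    have h4 : x - X i t ≠ 0 := hd i
    have hneg := (hasDerivAt_const x (-1 : ℂ)).div
      (((hasDerivAt_id' x).sub_const (X i t)).pow 2) (pow_ne_zero 2 h4)
    have hφx := ((hasDerivAt_const x (1 : ℂ)).div ((hasDerivAt_id' x).sub_const (X i t))
      h4).sub_const (1 / z)
    have m1 := (hneg.const_mul (c i t)).mul hexpx
    have m2 := (hφx.const_mul (c i t)).mul (hexpx.mul_const k)
    refine hasDerivAt_congr_value ((m1.add m2).smul_const (a i t)) ?_
    congr 1
    simp only [Pi.div_apply, Pi.pow_apply]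
    push_cast
    field_simp
    ring
  have hopen : ∀ᶠ y in nhds x, ∀ i : Fin N, y ≠ X i t :=
    Filter.eventually_all.2 fun i => eventually_ne_nhds (hx i)
  have hev : (fun y : ℂ => deriv
      (fun y' : ℂ => ∑ i : Fin N,
        (c i t * (1 / (y' - X i t) - 1 / z) * Complex.exp (k * y' + k ^ 2 * (t : ℂ))) • a i t) y)
      =ᶠ[nhds x]
      (fun y : ℂ => ∑ i : Fin N,
        (c i t * (-1 / (y - X i t) ^ 2) * Complex.exp (k * y + k ^ 2 * (t : ℂ))
          + c i t * (1 / (y - X i t) - 1 / z)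
              * (Complex.exp (k * y + k ^ 2 * (t : ℂ)) * k)) • a i t) :=
    hopen.mono fun y hy => (hF y hy).deriv
  rw [Filter.EventuallyEq.deriv_eq hev, hS.deriv]
  -- expand the smul of the a-derivative and split the sums
  simp only [smul_sub, smul_smul, Finset.smul_sum, Finset.sum_sub_distrib,
    Finset.sum_add_distrib]
  rw [sum_erase_swap (fun i j => (c i t * (1 / (x - X i t) - 1 / z)
      * Complex.exp (k * x + k ^ 2 * (t : ℂ))
      * ((∑ α : Fin l, b j t α * a i t α) / (X i t - X j t) ^ 2)) • a j t)]
  -- expansion of b·Ψ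
  have hbΨ : ∀ i : Fin N,
      (∑ α : Fin l, b i t α * (∑ j : Fin N,
        (c j t * (1 / (x - X j t) - 1 / z) * Complex.exp (k * x + k ^ 2 * (t : ℂ))) • a j t) α)
      = (∑ j ∈ Finset.univ.erase i,
          c j t * (1 / (x - X j t) - 1 / z) * Complex.exp (k * x + k ^ 2 * (t : ℂ))
            * (∑ α : Fin l, b i t α * a j t α))
        + c i t * (1 / (x - X i t) - 1 / z) * Complex.exp (k * x + k ^ 2 * (t : ℂ)) * 2 := by
    intro i
    rw [← hba i t, Finset.sum_erase_add Finset.univ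
      (fun j => c j t * (1 / (x - X j t) - 1 / z) * Complex.exp (k * x + k ^ 2 * (t : ℂ))
        * (∑ α : Fin l, b i t α * a j t α)) (Finset.mem_univ i)]
    simp only [Finset.sum_apply, Pi.smul_apply, smul_eq_mul, Finset.mul_sum]
    rw [Finset.sum_comm]
    exact Finset.sum_congr rfl fun j _ => Finset.sum_congr rfl fun α _ => by ring
  simp only [hbΨ]
  -- recombine into a single sum over i
  simp only [← Finset.sum_sub_distrib, ← Finset.sum_add_distrib]
  refine Finset.sum_eq_zero fun i _ => ?_
  rw [← Finset.sum_smul]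
  simp only [← sub_smul, ← add_smul]
  refine smul_eq_zero_of_left ?_ _
  -- now a purely scalar identity
  have hsum :
      (∑ j ∈ Finset.univ.erase i,
          (∑ α : Fin l, b i t α * a j t α) * c j t / (X i t - X j t) ^ 2)
        * (1 / (x - X i t) - 1 / z) * Complex.exp (k * x + k ^ 2 * (t : ℂ))
      - ∑ j ∈ Finset.univ.erase i,
          c j t * (1 / (x - X j t) - 1 / z) * Complex.exp (k * x + k ^ 2 * (t : ℂ))
            * ((∑ α : Fin l, b i t α * a j t α) / (X j t - X i t) ^ 2)
      + (∑ j ∈ Finset.univ.erase i,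
          c j t * (1 / (x - X j t) - 1 / z) * Complex.exp (k * x + k ^ 2 * (t : ℂ))
            * (∑ α : Fin l, b i t α * a j t α)) / (x - X i t) ^ 2
      = Complex.exp (k * x + k ^ 2 * (t : ℂ)) / (x - X i t) ^ 2
          * (∑ j ∈ Finset.univ.erase i,
              (∑ α : Fin l, b i t α * a j t α) * (1 / (X i t - X j t) - 1 / z) * c j t) := by
    rw [Finset.sum_mul, Finset.sum_mul, Finset.sum_div, Finset.mul_sum,
      ← Finset.sum_sub_distrib, ← Finset.sum_add_distrib]
    refine Finset.sum_congr rfl fun j hj => ?_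
    have hji : j ≠ i := Finset.ne_of_mem_erase hj
    have h1 : X i t - X j t ≠ 0 := hg i j hji.symm
    have h2 : X j t - X i t ≠ 0 := hg j i hji
    have h3 : x - X j t ≠ 0 := hd j
    have h4 : x - X i t ≠ 0 := hd i
    have e2 : (X j t - X i t) ^ 2 = (X i t - X j t) ^ 2 := by ring
    rw [e2]
    linear_combination ((∑ α : Fin l, b i t α * a j t α) * c j t
      * Complex.exp (k * x + k ^ 2 * (t : ℂ))) * key_identity x (X i t) (X j t) z h4 h3 h1 hz
  have hdiag :
      lam i t * c i t * (1 / (x - X i t) - 1 / z) * Complex.exp (k * x + k ^ 2 * (t : ℂ))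
      + c i t * (x' i t / (x - X i t) ^ 2) * Complex.exp (k * x + k ^ 2 * (t : ℂ))
      + c i t * (1 / (x - X i t) - 1 / z) * (Complex.exp (k * x + k ^ 2 * (t : ℂ)) * k ^ 2)
      + c i t * (1 / (x - X i t) - 1 / z) * Complex.exp (k * x + k ^ 2 * (t : ℂ)) * -(lam i t)
      - c i t * (2 / (x - X i t) ^ 3 - 2 * k / (x - X i t) ^ 2
          + k ^ 2 * (1 / (x - X i t) - 1 / z)) * Complex.exp (k * x + k ^ 2 * (t : ℂ))
      + c i t * (1 / (x - X i t) - 1 / z) * Complex.exp (k * x + k ^ 2 * (t : ℂ)) * 2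
          / (x - X i t) ^ 2
      = Complex.exp (k * x + k ^ 2 * (t : ℂ)) / (x - X i t) ^ 2
          * ((x' i t - 2 / z + 2 * k) * c i t) :=
    diag_identity (x - X i t) z k (lam i t) (c i t) (x' i t)
      (Complex.exp (k * x + k ^ 2 * (t : ℂ)))
  linear_combination hdiag + hsum
    + Complex.exp (k * x + k ^ 2 * (t : ℂ)) / (x - X i t) ^ 2 * heig i t
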